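/- arXiv:2210.09089 — 2 statements merged into one kernel-verified Lean document; each statement's English description precedes it below -/
import Mathlib

section
/- (Block saddle point injectivity for multiple eigenvalues) Let A, M be symmetric n×n real matrices, M positive definite, λ₀ an eigenvalue of the pencil (A, M) whose eigenspace is exactly span{u₁,…,u_m} with u_iᵀMu_j = δ_{ij}. Let U = [u₁ … u_m] ∈ ℝ^{n×m}. If (w, η) ∈ ℝⁿ × ℝ^m satisfies (A − λ₀M)w = M U η and UᵀMw = 0, then w = 0 and η = 0. -/
open Matrix

/-- Block saddle point injectivity for a multiple eigenvalue: if the eigenspace of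
the symmetric pencil `(A,M)` at `λ₀` is exactly the column span of `U` with
`UᵀMU = I`, and `(A − λ₀M)w = MUη`, `UᵀMw = 0`, then `w = 0` and `η = 0`. -/
theorem stmt11 {n m : ℕ} (A M : Matrix (Fin n) (Fin n) ℝ)
    (hA : A.IsSymm) (hM : M.IsSymm) (hMpos : M.PosDef)
    (lam₀ : ℝ) (U : Matrix (Fin n) (Fin m) ℝ)
    (hker : ∀ v, (A - lam₀ • M) *ᵥ v = 0 ↔ ∃ c : Fin m → ℝ, v = U *ᵥ c)
    (hortho : Uᵀ * M * U = (1 : Matrix (Fin m) (Fin m) ℝ))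
    (w : Fin n → ℝ) (η : Fin m → ℝ)
    (hw : (A - lam₀ • M) *ᵥ w = M *ᵥ (U *ᵥ η))
    (horth : Uᵀ *ᵥ (M *ᵥ w) = 0) :
    w = 0 ∧ η = 0 := by
  set B := A - lam₀ • M with hB
  have hBsymm : Bᵀ = B := by
    rw [hB, transpose_sub, transpose_smul, hA.eq, hM.eq]
  have hBU : B * U = 0 := by
    ext i j
    have h := (hker (U *ᵥ (Pi.single j 1))).mpr ⟨Pi.single j 1, rfl⟩
    have := congrFun h i
    simpa [mulVec_mulVec, mulVec_single, mul_apply, mulVec, dotProduct, col_apply, Pi.single_apply, Finset.sum_ite_eq'] using this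
  have hUtB : Uᵀ * B = 0 := by
    have := congrArg transpose hBU
    rwa [transpose_mul, hBsymm, transpose_zero] at this
  -- η = 0
  have hη : η = 0 := by
    have h1 : Uᵀ *ᵥ (M *ᵥ (U *ᵥ η)) = η := by
      rw [mulVec_mulVec, mulVec_mulVec, hortho, one_mulVec]
    have h2 : Uᵀ *ᵥ (B *ᵥ w) = 0 := by
      rw [mulVec_mulVec, hUtB, zero_mulVec]
    rw [← h1, ← hw, h2]
  have hBw : B *ᵥ w = 0 := by
    rw [hw, hη, mulVec_zero, mulVec_zero]
  obtain ⟨c, hc⟩ := (hker w).mp hBw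
  have hc0 : c = 0 := by
    have : Uᵀ *ᵥ (M *ᵥ (U *ᵥ c)) = c := by
      rw [mulVec_mulVec, mulVec_mulVec, hortho, one_mulVec]
    rw [← hc] at this
    rw [← this, horth]
  refine ⟨by rw [hc, hc0, mulVec_zero], hη⟩
end

section
/- (First order eigenvalue derivative formula for multiple eigenvalues, finite-dimensional version) Let A(t), M(t) be differentiable families of symmetric n×n real matrices with M(t) positive definite. Suppose U(t) ∈ ℝ^{n×m} and Λ(t) ∈ ℝ^{m×m} are differentiable with A(t)U(t) = M(t)U(t)Λ(t), U(t)ᵀM(t)U(t) = I_m, and Λ(0) = λ₀I_m. Then Λ'(0) = U(0)ᵀA'(0)U(0) − λ₀·U(0)ᵀM'(0)U(0). -/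
open Matrix

theorem matMulDeriv' {p q r : ℕ} {f : ℝ → Matrix (Fin p) (Fin q) ℝ}
    {g : ℝ → Matrix (Fin q) (Fin r) ℝ}
    {f' : Matrix (Fin p) (Fin q) ℝ} {g' : Matrix (Fin q) (Fin r) ℝ}
    (hf : ∀ i j, HasDerivAt (fun t => f t i j) (f' i j) 0)
    (hg : ∀ i j, HasDerivAt (fun t => g t i j) (g' i j) 0) :
    ∀ i j, HasDerivAt (fun t => (f t * g t) i j) ((f' * g 0 + f 0 * g') i j) 0 := by
  intro i j
  have h : HasDerivAt (fun t => ∑ k, f t i k * g t k j)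
      (∑ k, (f' i k * g 0 k j + f 0 i k * g' k j)) 0 :=
    HasDerivAt.fun_sum fun k _ => (hf i k).mul (hg k j)
  simpa [Matrix.mul_apply, Matrix.add_apply, Finset.sum_add_distrib] using h

/-- First order derivative formula for a degenerate eigenvalue of multiplicity `m`:
if `A(t)U(t) = M(t)U(t)Λ(t)`, `U(t)ᵀM(t)U(t) = I`, and `Λ(0) = λ₀I`, then
`Λ'(0) = U(0)ᵀA'(0)U(0) − λ₀ U(0)ᵀM'(0)U(0)`. -/
theorem stmt12 {n m : ℕ}
    (A M : ℝ → Matrix (Fin n) (Fin n) ℝ)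
    (U : ℝ → Matrix (Fin n) (Fin m) ℝ) (Λ : ℝ → Matrix (Fin m) (Fin m) ℝ)
    (A' M' : Matrix (Fin n) (Fin n) ℝ) (U' : Matrix (Fin n) (Fin m) ℝ)
    (Λ' : Matrix (Fin m) (Fin m) ℝ) (lam₀ : ℝ)
    (hA : ∀ i j, HasDerivAt (fun t => A t i j) (A' i j) 0)
    (hM : ∀ i j, HasDerivAt (fun t => M t i j) (M' i j) 0)
    (hU : ∀ i j, HasDerivAt (fun t => U t i j) (U' i j) 0)
    (hΛ : ∀ i j, HasDerivAt (fun t => Λ t i j) (Λ' i j) 0)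
    (hAsymm : ∀ t, (A t).IsSymm) (hMsymm : ∀ t, (M t).IsSymm)
    (hMpos : ∀ t, (M t).PosDef)
    (heig : ∀ t, A t * U t = M t * U t * Λ t)
    (hortho : ∀ t, (U t)ᵀ * M t * U t = (1 : Matrix (Fin m) (Fin m) ℝ))
    (hΛ0 : Λ 0 = lam₀ • (1 : Matrix (Fin m) (Fin m) ℝ)) :
    Λ' = (U 0)ᵀ * A' * U 0 - lam₀ • ((U 0)ᵀ * M' * U 0) := by
  -- derivative of A t * U t
  have h1 := matMulDeriv' hA hU
  -- derivative of M t * U t * Λ t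
  have h2 := matMulDeriv' (matMulDeriv' hM hU) hΛ
  -- the two functions are equal, so derivatives agree
  have key : A' * U 0 + A 0 * U' =
      (M' * U 0 + M 0 * U') * Λ 0 + M 0 * U 0 * Λ' := by
    ext i j
    have h2' : HasDerivAt (fun t => (A t * U t) i j)
        (((M' * U 0 + M 0 * U') * Λ 0 + M 0 * U 0 * Λ') i j) 0 := by
      simpa only [heig] using h2 i j
    exact (h1 i j).unique h2'
  -- U0ᵀ A0 = lam₀ • (U0ᵀ M0)
  have hUA : (U 0)ᵀ * A 0 = lam₀ • ((U 0)ᵀ * M 0) := by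
    have h : (A 0 * U 0)ᵀ = (lam₀ • (M 0 * U 0))ᵀ := by
      rw [heig 0, hΛ0, Matrix.mul_smul, Matrix.mul_one]
    simp only [Matrix.transpose_mul, Matrix.transpose_smul,
      (hAsymm 0).eq, (hMsymm 0).eq] at h
    exact h
  -- multiply key on the left by U0ᵀ
  have key2 := congrArg (fun X : Matrix (Fin n) (Fin m) ℝ => (U 0)ᵀ * X) key
  simp only [Matrix.mul_add] at key2
  rw [hΛ0] at key2
  have e1 : (U 0)ᵀ * (A 0 * U') = lam₀ • ((U 0)ᵀ * (M 0 * U')) := by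
    rw [← Matrix.mul_assoc, hUA, Matrix.smul_mul, Matrix.mul_assoc]
  have e2 : (U 0)ᵀ * ((M' * U 0 + M 0 * U') * (lam₀ • (1 : Matrix (Fin m) (Fin m) ℝ)))
      = lam₀ • ((U 0)ᵀ * (M' * U 0)) + lam₀ • ((U 0)ᵀ * (M 0 * U')) := by
    simp [Matrix.mul_smul, Matrix.mul_add, smul_add]
  have e3 : (U 0)ᵀ * (M 0 * U 0 * Λ') = Λ' := by
    rw [← Matrix.mul_assoc, ← Matrix.mul_assoc, hortho 0, Matrix.one_mul]
  rw [e1, e2, e3] at key2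
  have : (U 0)ᵀ * (A' * U 0) = lam₀ • ((U 0)ᵀ * (M' * U 0)) + Λ' := by
    have := key2
    linear_combination (norm := abel) this
  rw [← Matrix.mul_assoc] at this
  rw [this]
  rw [← Matrix.mul_assoc]
  abel
end
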